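/- For a bounded nonnegative random variable X that is not almost surely constant, the effective capacity C(θ) = -(1/θ) log E[e^{-θX}] is strictly decreasing in θ for θ > 0; that is, if θ₁ > θ₂ > 0 then C(θ₁) < C(θ₂). -/

import Mathlib

open Finset Real Filter

/-- Effective capacity of a finite-valued random variable (values `s k` with
probabilities `w k`) is strictly decreasing in the QoS index `θ`, provided the
variable is nonnegative (hence bounded, being finite-valued) and not a.s. constant. -/
theorem effective_capacity_strictly_decreasing
    (K : ℕ) (w s : Fin K → ℝ)
    (hw : ∀ k, 0 ≤ w k) (hsum : ∑ k, w k = 1)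
    (hnonneg : ∀ k, 0 ≤ s k)
    (hnotconst : ∃ i j, 0 < w i ∧ 0 < w j ∧ s i ≠ s j)
    (θ₁ θ₂ : ℝ) (h2 : 0 < θ₂) (h21 : θ₂ < θ₁) :
    -(1 / θ₁) * Real.log (∑ k, w k * Real.exp (-θ₁ * s k)) <
      -(1 / θ₂) * Real.log (∑ k, w k * Real.exp (-θ₂ * s k)) := by
  classical
  obtain ⟨i, j, hwi, hwj, hsij⟩ := hnotconst
  have h1 : (0:ℝ) < θ₁ := h2.trans h21
  set p : ℝ := θ₁ / θ₂ with hp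
  have hp1 : 1 < p := (one_lt_div h2).2 h21
  set Y : Fin K → ℝ := fun k => Real.exp (-θ₂ * s k) with hY
  have hYpos : ∀ k, 0 < Y k := fun k => Real.exp_pos _
  set S₂ : ℝ := ∑ k, w k * Y k with hS₂
  set S₁ : ℝ := ∑ k, w k * Real.exp (-θ₁ * s k) with hS₁
  have hS₂pos : 0 < S₂ :=
    Finset.sum_pos' (fun k _ => mul_nonneg (hw k) (hYpos k).le)
      ⟨i, Finset.mem_univ i, mul_pos hwi (hYpos i)⟩
  have hS₁pos : 0 < S₁ :=
    Finset.sum_pos' (fun k _ => mul_nonneg (hw k) (Real.exp_pos _).le)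
      ⟨i, Finset.mem_univ i, mul_pos hwi (Real.exp_pos _)⟩
  -- filtered set of positive weights
  set t : Finset (Fin K) := Finset.univ.filter (fun k => 0 < w k) with ht
  have hit : i ∈ t := Finset.mem_filter.2 ⟨Finset.mem_univ i, hwi⟩
  have hjt : j ∈ t := Finset.mem_filter.2 ⟨Finset.mem_univ j, hwj⟩
  have hsumt : ∑ k ∈ t, w k = 1 := by
    rw [← hsum]
    apply Finset.sum_subset (Finset.subset_univ t)
    intro k _ hk
    have : ¬ 0 < w k := fun h => hk (Finset.mem_filter.2 ⟨Finset.mem_univ k, h⟩)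
    linarith [hw k]
  have hsame : ∀ f : Fin K → ℝ, ∑ k ∈ t, w k * f k = ∑ k, w k * f k := by
    intro f
    apply Finset.sum_subset (Finset.subset_univ t)
    intro k _ hk
    have : ¬ 0 < w k := fun h => hk (Finset.mem_filter.2 ⟨Finset.mem_univ k, h⟩)
    have : w k = 0 := le_antisymm (not_lt.1 this) (hw k)
    simp [this]
  have hYij : Y i ≠ Y j := by
    intro h
    apply hsij
    have := Real.exp_injective h
    have hθ : -θ₂ ≠ 0 := by linarith
    exact mul_left_cancel₀ hθ this
  -- strict Jensen
  have hjensen := (strictConvexOn_rpow hp1).map_sum_lt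
    (t := t) (w := w) (p := Y)
    (fun k hk => (Finset.mem_filter.1 hk).2) hsumt
    (fun k _ => (hYpos k).le)
    ⟨i, hit, j, hjt, hYij⟩
  simp only [smul_eq_mul] at hjensen
  have hYp : ∀ k, Y k ^ p = Real.exp (-θ₁ * s k) := by
    intro k
    rw [hY]
    rw [← Real.exp_mul]
    ring_nf
    congr 1
    field_simp
    have e : θ₂ * (θ₁ / θ₂) = θ₁ := by field_simp [h2.ne']
    rw [hp]; linear_combination (-(s k)) * e
  have hjensen' : (∑ k ∈ t, w k * Y k) ^ p < S₁ := by
    calc (∑ k ∈ t, w k * Y k) ^ p < ∑ k ∈ t, w k * Y k ^ p := hjensen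
    _ = ∑ k ∈ t, w k * Real.exp (-θ₁ * s k) := by simp_rw [hYp]
    _ = S₁ := hsame _
  rw [hsame Y] at hjensen'
  -- take logs
  have hlog : p * Real.log S₂ < Real.log S₁ := by
    have := Real.log_lt_log (Real.rpow_pos_of_pos hS₂pos p) hjensen'
    rwa [Real.log_rpow hS₂pos] at this
  have h1' : 0 < 1/θ₁ := by positivity
  have := mul_lt_mul_of_pos_left hlog h1'
  have key : (1/θ₂) * Real.log S₂ < (1/θ₁) * Real.log S₁ := by
    have heq : (1/θ₁) * (p * Real.log S₂) = (1/θ₂) * Real.log S₂ := by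
      rw [hp]; field_simp
    linarith [this, heq.symm]
  linarith [key]
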